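/- For the upper measurement surface Γ_h, the analogous Helmholtz–Kirchhoff identity holds with a sign change: ∫_{Γ_h} [conj(∂_x₂ G(x,y)) G(x,z) - ∂_x₂ G(x,z) conj(G(x,y))] ds(x) = -F^U_α(y,z) for y₂, z₂ < h, where F^U_α(y,z) = (i/(2Λ)) Σ_{n∈B_α} (1/β_n) e^{iα_n(y₁-z₁) + iβ_n(y₂-z₂)}. -/

import Mathlib

open Complex

lemma ortho13 (Λ : ℝ) (hΛ : 0 < Λ) (m n : ℤ) :
    (∫ x : ℝ in (-(Λ/2))..(Λ/2),
      Complex.exp ((Complex.I * ((2 * Real.pi * ((n : ℝ) - m) / Λ : ℝ) : ℂ)) * x))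
      = if n = m then (Λ : ℂ) else 0 := by
  by_cases hnm : n = m
  · subst hnm
    simp
  · rw [if_neg hnm]
    have hreal : (2 * Real.pi * ((n : ℝ) - m) / Λ) ≠ 0 := by
      apply div_ne_zero _ hΛ.ne'
      have h1 : ((n : ℝ) - m) ≠ 0 := by
        intro hc
        exact hnm (by exact_mod_cast sub_eq_zero.mp hc)
      positivity
    have hc : (Complex.I * ((2 * Real.pi * ((n : ℝ) - m) / Λ : ℝ) : ℂ)) ≠ 0 :=
      mul_ne_zero Complex.I_ne_zero (by exact_mod_cast hreal)
    rw [integral_exp_mul_complex hc]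
    have : Complex.exp (Complex.I * ((2 * Real.pi * ((n : ℝ) - m) / Λ : ℝ) : ℂ) * ((Λ:ℝ)/2 : ℝ))
        = Complex.exp (Complex.I * ((2 * Real.pi * ((n : ℝ) - m) / Λ : ℝ) : ℂ) * ((-(Λ/2) : ℝ) : ℂ)) := by
      rw [Complex.exp_eq_exp_iff_exists_int]
      refine ⟨n - m, ?_⟩
      have hΛc : (Λ : ℂ) ≠ 0 := by exact_mod_cast hΛ.ne'
      push_cast
      field_simp
      ring
    rw [this, sub_self, zero_div]

theorem stmt13 (k Λ α h : ℝ) (hk : 0 < k) (hΛ : 0 < Λ) (hh : 0 < h)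
    (αn : ℤ → ℝ) (hαn : ∀ n, αn n = α + 2 * Real.pi * n / Λ)
    (hwood : ∀ n : ℤ, |αn n| ≠ k)
    (B S : Finset ℤ) (hBS : B ⊆ S)
    (hB : ∀ n ∈ S, (n ∈ B ↔ |αn n| < k))
    (β : ℤ → ℂ)
    (hβprop : ∀ n ∈ B, β n = ((Real.sqrt (k^2 - (αn n)^2) : ℝ) : ℂ))
    (hβev : ∀ n ∈ S, n ∉ B → β n = Complex.I * ((Real.sqrt ((αn n)^2 - k^2) : ℝ) : ℂ))
    -- the truncated spectral Green's function restricted to x₂ = h, and its x₂-derivative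
    (G dG : ℝ → ℝ × ℝ → ℂ)
    (hG : ∀ (x₁ : ℝ) (y : ℝ × ℝ), G x₁ y =
      (Complex.I / (2 * Λ)) * ∑ n ∈ S, (1 / β n) *
        Complex.exp (Complex.I * (αn n) * (x₁ - y.1) + Complex.I * β n * (h - y.2)))
    (hdG : ∀ (x₁ : ℝ) (y : ℝ × ℝ), dG x₁ y =
      (Complex.I / (2 * Λ)) * ∑ n ∈ S, (1 / β n) * (Complex.I * β n) *
        Complex.exp (Complex.I * (αn n) * (x₁ - y.1) + Complex.I * β n * (h - y.2)))
    (FU : ℝ × ℝ → ℝ × ℝ → ℂ)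
    (hFU : ∀ y z : ℝ × ℝ, FU y z =
      (Complex.I / (2 * Λ)) * ∑ n ∈ B, (1 / β n) *
        Complex.exp (Complex.I * (αn n) * (y.1 - z.1) + Complex.I * β n * (y.2 - z.2))) :
    ∀ y z : ℝ × ℝ, y.2 < h → z.2 < h →
      (∫ x₁ in (-(Λ/2))..(Λ/2),
        ((starRingEnd ℂ) (dG x₁ y) * G x₁ z - dG x₁ z * (starRingEnd ℂ) (G x₁ y)))
        = -FU y z := by
  intro y z hy hz
  have hΛc : (Λ : ℂ) ≠ 0 := by exact_mod_cast hΛ.ne'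
  -- β never vanishes on S
  have hβne : ∀ n ∈ S, β n ≠ 0 := by
    intro n hn
    by_cases hb : n ∈ B
    · rw [hβprop n hb]
      have h1 : |αn n| < k := (hB n hn).mp hb
      have h2 : 0 < k ^ 2 - (αn n) ^ 2 := by
        have := abs_nonneg (αn n)
        nlinarith [_root_.sq_abs (αn n)]
      exact_mod_cast (Real.sqrt_pos.mpr h2).ne'
    · rw [hβev n hn hb]
      have h1 : k < |αn n| :=
        lt_of_le_of_ne (not_lt.mp (fun hlt => hb ((hB n hn).mpr hlt))) (hwood n).symm
      have h2 : 0 < (αn n) ^ 2 - k ^ 2 := by nlinarith [_root_.sq_abs (αn n)]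
      exact mul_ne_zero Complex.I_ne_zero
        (by exact_mod_cast (Real.sqrt_pos.mpr h2).ne')
  -- the coefficient (x₁-independent) part of each mode
  set g : ℤ → ℝ × ℝ → ℂ := fun n w =>
    (1 / β n) * Complex.exp (-(Complex.I * (αn n) * w.1) + Complex.I * β n * ((h - w.2 : ℝ)))
    with hg
  -- factorizations of G, dG and their conjugates
  have hGf : ∀ (x₁ : ℝ) (w : ℝ × ℝ), G x₁ w
      = (Complex.I / (2 * Λ)) * ∑ n ∈ S, g n w * Complex.exp (Complex.I * (αn n) * x₁) := by
    intro x₁ w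
    rw [hG]
    congr 1
    refine Finset.sum_congr rfl fun n _ => ?_
    simp only [hg]
    rw [show Complex.I * ((αn n : ℝ) : ℂ) * ((x₁ : ℂ) - (w.1 : ℂ)) + Complex.I * β n * ((h : ℂ) - (w.2 : ℂ))
        = (-(Complex.I * (αn n) * w.1) + Complex.I * β n * ((h - w.2 : ℝ)))
          + Complex.I * (αn n) * x₁ by push_cast; ring,
      Complex.exp_add]
    ring
  have hdGf : ∀ (x₁ : ℝ) (w : ℝ × ℝ), dG x₁ w
      = (Complex.I / (2 * Λ)) * ∑ n ∈ S,
          Complex.I * β n * g n w * Complex.exp (Complex.I * (αn n) * x₁) := by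
    intro x₁ w
    rw [hdG]
    congr 1
    refine Finset.sum_congr rfl fun n _ => ?_
    simp only [hg]
    rw [show Complex.I * ((αn n : ℝ) : ℂ) * ((x₁ : ℂ) - (w.1 : ℂ)) + Complex.I * β n * ((h : ℂ) - (w.2 : ℂ))
        = (-(Complex.I * (αn n) * w.1) + Complex.I * β n * ((h - w.2 : ℝ)))
          + Complex.I * (αn n) * x₁ by push_cast; ring,
      Complex.exp_add]
    ring
  have hconj_exp : ∀ (a x : ℝ), (starRingEnd ℂ) (Complex.exp (Complex.I * a * x))
      = Complex.exp (-(Complex.I * a * x)) := by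
    intro a x
    rw [← Complex.exp_conj]
    congr 1
    simp [map_mul, Complex.conj_I, Complex.conj_ofReal]
  have hGc : ∀ (x₁ : ℝ) (w : ℝ × ℝ), (starRingEnd ℂ) (G x₁ w)
      = (starRingEnd ℂ) (Complex.I / (2 * (Λ:ℂ))) *
        ∑ n ∈ S, (starRingEnd ℂ) (g n w) * Complex.exp (-(Complex.I * (αn n) * x₁)) := by
    intro x₁ w
    rw [hGf, map_mul, map_sum]
    congr 1
    refine Finset.sum_congr rfl fun n _ => ?_
    rw [map_mul, hconj_exp]
  have hdGc : ∀ (x₁ : ℝ) (w : ℝ × ℝ), (starRingEnd ℂ) (dG x₁ w)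
      = (starRingEnd ℂ) (Complex.I / (2 * (Λ:ℂ))) *
        ∑ n ∈ S, (starRingEnd ℂ) (Complex.I * β n * g n w) *
          Complex.exp (-(Complex.I * (αn n) * x₁)) := by
    intro x₁ w
    rw [hdGf, map_mul, map_sum]
    congr 1
    refine Finset.sum_congr rfl fun n _ => ?_
    rw [map_mul, hconj_exp]
  -- pointwise expansions of the two products
  set cC : ℂ := (starRingEnd ℂ) (Complex.I / (2 * (Λ:ℂ))) with hcCdef
  set C : ℂ := Complex.I / (2 * (Λ:ℂ)) with hCdef
  have hexpc : ∀ (m n : ℤ) (x₁ : ℝ),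
      Complex.exp ((Complex.I * ((2 * Real.pi * ((n : ℝ) - m) / Λ : ℝ) : ℂ)) * x₁)
        = Complex.exp (-(Complex.I * (αn m) * x₁)) * Complex.exp (Complex.I * (αn n) * x₁) := by
    intro m n x₁
    rw [← Complex.exp_add]
    congr 1
    rw [hαn n, hαn m]
    push_cast
    field_simp
    ring
  have hpt1 : ∀ x₁ : ℝ, (starRingEnd ℂ) (dG x₁ y) * G x₁ z
      = ∑ m ∈ S, ∑ n ∈ S,
          (cC * C * ((starRingEnd ℂ) (Complex.I * β m * g m y) * g n z)) *
            Complex.exp ((Complex.I * ((2 * Real.pi * ((n : ℝ) - m) / Λ : ℝ) : ℂ)) * x₁) := by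
    intro x₁
    rw [hdGc x₁ y, hGf x₁ z, Finset.mul_sum, Finset.mul_sum, Finset.sum_mul_sum]
    refine Finset.sum_congr rfl fun m _ => Finset.sum_congr rfl fun n _ => ?_
    rw [hexpc]
    ring
  have hpt2 : ∀ x₁ : ℝ, dG x₁ z * (starRingEnd ℂ) (G x₁ y)
      = ∑ n ∈ S, ∑ m ∈ S,
          (cC * C * (Complex.I * β n * g n z * (starRingEnd ℂ) (g m y))) *
            Complex.exp ((Complex.I * ((2 * Real.pi * ((n : ℝ) - m) / Λ : ℝ) : ℂ)) * x₁) := by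
    intro x₁
    rw [hdGf x₁ z, hGc x₁ y, Finset.mul_sum, Finset.mul_sum, Finset.sum_mul_sum]
    refine Finset.sum_congr rfl fun n _ => Finset.sum_congr rfl fun m _ => ?_
    rw [hexpc]
    ring
  -- integrability
  have hint1 : ∀ (c : ℂ) (r : ℝ), IntervalIntegrable
      (fun x : ℝ => c * Complex.exp ((Complex.I * ((r : ℝ) : ℂ)) * x))
      MeasureTheory.volume (-(Λ/2)) (Λ/2) := by
    intro c r
    exact (by fun_prop : Continuous fun x : ℝ =>
      c * Complex.exp ((Complex.I * ((r : ℝ) : ℂ)) * x)).intervalIntegrable _ _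
  have hint2 : ∀ (Φ : ℤ → ℤ → ℂ) (m : ℤ), IntervalIntegrable
      (fun x : ℝ => ∑ n ∈ S, Φ m n *
        Complex.exp ((Complex.I * ((2 * Real.pi * ((n : ℝ) - m) / Λ : ℝ) : ℂ)) * x))
      MeasureTheory.volume (-(Λ/2)) (Λ/2) := by
    intro Φ m
    exact (by fun_prop : Continuous fun x : ℝ => ∑ n ∈ S, Φ m n *
      Complex.exp ((Complex.I * ((2 * Real.pi * ((n : ℝ) - m) / Λ : ℝ) : ℂ)) * x)).intervalIntegrable _ _
  have hint2' : ∀ (Φ : ℤ → ℤ → ℂ) (n : ℤ), IntervalIntegrable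
      (fun x : ℝ => ∑ m ∈ S, Φ n m *
        Complex.exp ((Complex.I * ((2 * Real.pi * ((n : ℝ) - m) / Λ : ℝ) : ℂ)) * x))
      MeasureTheory.volume (-(Λ/2)) (Λ/2) := by
    intro Φ n
    exact (by fun_prop : Continuous fun x : ℝ => ∑ m ∈ S, Φ n m *
      Complex.exp ((Complex.I * ((2 * Real.pi * ((n : ℝ) - m) / Λ : ℝ) : ℂ)) * x)).intervalIntegrable _ _
  have hint3 : ∀ (Φ : ℤ → ℤ → ℂ), IntervalIntegrable
      (fun x : ℝ => ∑ m ∈ S, ∑ n ∈ S, Φ m n *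
        Complex.exp ((Complex.I * ((2 * Real.pi * ((n : ℝ) - m) / Λ : ℝ) : ℂ)) * x))
      MeasureTheory.volume (-(Λ/2)) (Λ/2) := by
    intro Φ
    exact (by fun_prop : Continuous fun x : ℝ => ∑ m ∈ S, ∑ n ∈ S, Φ m n *
      Complex.exp ((Complex.I * ((2 * Real.pi * ((n : ℝ) - m) / Λ : ℝ) : ℂ)) * x)).intervalIntegrable _ _
  have hint3' : ∀ (Φ : ℤ → ℤ → ℂ), IntervalIntegrable
      (fun x : ℝ => ∑ n ∈ S, ∑ m ∈ S, Φ n m *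
        Complex.exp ((Complex.I * ((2 * Real.pi * ((n : ℝ) - m) / Λ : ℝ) : ℂ)) * x))
      MeasureTheory.volume (-(Λ/2)) (Λ/2) := by
    intro Φ
    exact (by fun_prop : Continuous fun x : ℝ => ∑ n ∈ S, ∑ m ∈ S, Φ n m *
      Complex.exp ((Complex.I * ((2 * Real.pi * ((n : ℝ) - m) / Λ : ℝ) : ℂ)) * x)).intervalIntegrable _ _
  -- compute the integral
  have hI1 : (∫ x₁ in (-(Λ/2))..(Λ/2), ∑ m ∈ S, ∑ n ∈ S,
        (cC * C * ((starRingEnd ℂ) (Complex.I * β m * g m y) * g n z)) *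
          Complex.exp ((Complex.I * ((2 * Real.pi * ((n : ℝ) - m) / Λ : ℝ) : ℂ)) * x₁))
      = ∑ n ∈ S, cC * C * ((starRingEnd ℂ) (Complex.I * β n * g n y) * g n z) * Λ := by
    rw [intervalIntegral.integral_finset_sum (fun m _ => hint2 (fun m n => cC * C * ((starRingEnd ℂ) (Complex.I * β m * g m y) * g n z)) m)]
    refine Finset.sum_congr rfl fun m hm => ?_
    rw [intervalIntegral.integral_finset_sum (fun n _ => hint1 _ _)]
    calc (∑ n ∈ S, ∫ x₁ in (-(Λ/2))..(Λ/2),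
          (cC * C * ((starRingEnd ℂ) (Complex.I * β m * g m y) * g n z)) *
            Complex.exp ((Complex.I * ((2 * Real.pi * ((n : ℝ) - m) / Λ : ℝ) : ℂ)) * x₁))
        = ∑ n ∈ S, (cC * C * ((starRingEnd ℂ) (Complex.I * β m * g m y) * g n z)) *
            (if n = m then (Λ:ℂ) else 0) := by
          refine Finset.sum_congr rfl fun n _ => ?_
          rw [intervalIntegral.integral_const_mul, ortho13 Λ hΛ m n]
      _ = cC * C * ((starRingEnd ℂ) (Complex.I * β m * g m y) * g m z) * Λ := by
          rw [Finset.sum_eq_single_of_mem m hm (fun n _ hne => by simp [hne])]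
          simp
  have hI2 : (∫ x₁ in (-(Λ/2))..(Λ/2), ∑ n ∈ S, ∑ m ∈ S,
        (cC * C * (Complex.I * β n * g n z * (starRingEnd ℂ) (g m y))) *
          Complex.exp ((Complex.I * ((2 * Real.pi * ((n : ℝ) - m) / Λ : ℝ) : ℂ)) * x₁))
      = ∑ n ∈ S, cC * C * (Complex.I * β n * g n z * (starRingEnd ℂ) (g n y)) * Λ := by
    rw [intervalIntegral.integral_finset_sum (fun n _ => hint2' (fun n m => cC * C * (Complex.I * β n * g n z * (starRingEnd ℂ) (g m y))) n)]
    refine Finset.sum_congr rfl fun n hn => ?_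
    rw [intervalIntegral.integral_finset_sum (fun m _ => hint1 _ _)]
    calc (∑ m ∈ S, ∫ x₁ in (-(Λ/2))..(Λ/2),
          (cC * C * (Complex.I * β n * g n z * (starRingEnd ℂ) (g m y))) *
            Complex.exp ((Complex.I * ((2 * Real.pi * ((n : ℝ) - m) / Λ : ℝ) : ℂ)) * x₁))
        = ∑ m ∈ S, (cC * C * (Complex.I * β n * g n z * (starRingEnd ℂ) (g m y))) *
            (if n = m then (Λ:ℂ) else 0) := by
          refine Finset.sum_congr rfl fun m _ => ?_
          rw [intervalIntegral.integral_const_mul, ortho13 Λ hΛ m n]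
      _ = cC * C * (Complex.I * β n * g n z * (starRingEnd ℂ) (g n y)) * Λ := by
          rw [Finset.sum_eq_single_of_mem n hn (fun m _ hne => by simp [hne.symm])]
          simp
  -- put the integral together
  have hsplit : (∫ x₁ in (-(Λ/2))..(Λ/2),
        ((starRingEnd ℂ) (dG x₁ y) * G x₁ z - dG x₁ z * (starRingEnd ℂ) (G x₁ y)))
      = ∑ n ∈ S, (cC * C * ((starRingEnd ℂ) (Complex.I * β n * g n y) * g n z)
          - cC * C * (Complex.I * β n * g n z * (starRingEnd ℂ) (g n y))) * Λ := by
    simp only [hpt1, hpt2]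
    rw [intervalIntegral.integral_sub (hint3 (fun m n => cC * C * ((starRingEnd ℂ) (Complex.I * β m * g m y) * g n z))) (hint3' (fun n m => cC * C * (Complex.I * β n * g n z * (starRingEnd ℂ) (g m y)))), hI1, hI2,
      ← Finset.sum_sub_distrib]
    refine Finset.sum_congr rfl fun n _ => ?_
    ring
  rw [hsplit, hFU]
  rw [Finset.mul_sum, ← Finset.sum_neg_distrib, ← Finset.sum_sdiff hBS]
  have hzero : ∀ n ∈ S \ B, (cC * C * ((starRingEnd ℂ) (Complex.I * β n * g n y) * g n z)
      - cC * C * (Complex.I * β n * g n z * (starRingEnd ℂ) (g n y))) * Λ = 0 := by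
    intro n hn
    rw [Finset.mem_sdiff] at hn
    have heb := hβev n hn.1 hn.2
    have e1 : Complex.I * β n = -((Real.sqrt ((αn n)^2 - k^2) : ℝ) : ℂ) := by
      rw [heb, ← mul_assoc, Complex.I_mul_I]
      ring
    rw [map_mul, e1, map_neg, Complex.conj_ofReal]
    ring
  rw [Finset.sum_eq_zero hzero, zero_add]
  refine Finset.sum_congr rfl fun n hn => ?_
  -- propagating modes
  have hnS : n ∈ S := hBS hn
  have hb := hβprop n hn
  set r : ℝ := Real.sqrt (k^2 - (αn n)^2) with hr
  have hrpos : 0 < r := by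
    have h1 : |αn n| < k := (hB n hnS).mp hn
    have h2 : 0 < k ^ 2 - (αn n) ^ 2 := by
      have := abs_nonneg (αn n)
      nlinarith [_root_.sq_abs (αn n)]
    exact Real.sqrt_pos.mpr h2
  have hrc : (r : ℂ) ≠ 0 := by exact_mod_cast hrpos.ne'
  have hconj_g : (starRingEnd ℂ) (g n y)
      = (1 / (r:ℂ)) * Complex.exp (Complex.I * (αn n) * y.1 - Complex.I * (r:ℂ) * ((h - y.2 : ℝ))) := by
    simp only [hg, hb]
    rw [map_mul, ← Complex.exp_conj]
    congr 1
    · simp [map_div₀, Complex.conj_ofReal]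
    · simp only [map_add, map_neg, map_mul, Complex.conj_I, Complex.conj_ofReal]
      ring
  have e1 : (starRingEnd ℂ) (Complex.I * β n) = -(Complex.I * (r:ℂ)) := by
    rw [hb, map_mul, Complex.conj_I, Complex.conj_ofReal]
    ring
  have h2 : (starRingEnd ℂ) (2 * (Λ:ℂ)) = 2 * (Λ:ℂ) := by
    simp [map_mul, map_ofNat, Complex.conj_ofReal]
  have hcc : cC * C = 1 / (4 * (Λ:ℂ)^2) := by
    rw [hcCdef, hCdef, map_div₀, Complex.conj_I, h2]
    field_simp
    ring_nf
    rw [Complex.I_sq]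
    ring
  have hE : Complex.exp (Complex.I * ((αn n : ℝ):ℂ) * ((y.1:ℂ) - (z.1:ℂ)) + Complex.I * (r:ℂ) * ((y.2:ℂ) - (z.2:ℂ)))
      = Complex.exp (Complex.I * (αn n) * y.1 - Complex.I * (r:ℂ) * ((h - y.2 : ℝ))) *
        Complex.exp (-(Complex.I * ((αn n : ℝ):ℂ) * (z.1:ℂ)) + Complex.I * (r:ℂ) * ((h - z.2 : ℝ):ℂ)) := by
    rw [← Complex.exp_add]
    congr 1
    push_cast
    ring
  rw [map_mul, e1, hconj_g, hb]
  simp only [hg, hb]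
  rw [hE, hcc, hCdef]
  field_simp [hrc, hΛc]
  ring
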